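/- Let P be a penny configuration in general position and let A ∈ P have degree 5 such that every unit-neighbor of A also has degree 5. Then A belongs to a kernel: there exist three unit-neighbors X, Y, Z of A, each of degree 5, with dist(A,X) = dist(A,Y) = dist(A,Z) = 1, dist(X,Y) = 1, and dist(Y,Z) = 1 (so that {A, X, Y, Z} forms a kernel with the five unit distances AX, XY, YZ, ZA, AY). -/

import Mathlib

open Real EuclideanGeometry

/-- The Euclidean plane. -/
abbrev Pt := EuclideanSpace ℝ (Fin 2)

/-- A penny configuration in general position: a finite set of points in the plane
such that any two distinct points are at distance at least 1 and no three points
are collinear. -/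
def PennyGP (P : Finset Pt) : Prop :=
  (∀ p ∈ P, ∀ q ∈ P, p ≠ q → 1 ≤ dist p q) ∧
  (∀ p ∈ P, ∀ q ∈ P, ∀ r ∈ P, p ≠ q → p ≠ r → q ≠ r →
    ¬ Collinear ℝ ({p, q, r} : Set Pt))

/-- The degree of a point `A` in the penny graph of `P`: the number of points of `P`
at distance exactly 1 from `A`. -/
noncomputable def deg (P : Finset Pt) (A : Pt) : ℕ :=
  {q : Pt | q ∈ P ∧ dist A q = 1}.ncard

/-- A kernel: four distinct points of `P`, each of degree 5, with the five unit
distances `LU`, `UR`, `RD`, `DL`, `LR`. -/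
def IsKernel (P : Finset Pt) (L U R D : Pt) : Prop :=
  L ∈ P ∧ U ∈ P ∧ R ∈ P ∧ D ∈ P ∧
  List.Pairwise (· ≠ ·) [L, U, R, D] ∧
  deg P L = 5 ∧ deg P U = 5 ∧ deg P R = 5 ∧ deg P D = 5 ∧
  dist L U = 1 ∧ dist U R = 1 ∧ dist R D = 1 ∧ dist D L = 1 ∧ dist L R = 1

/-- A point belongs to a kernel if it is one of the four points of some kernel of `P`. -/
def InKernel (P : Finset Pt) (X : Pt) : Prop :=
  ∃ L U R D : Pt, IsKernel P L U R D ∧ X ∈ ({L, U, R, D} : Set Pt)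





noncomputable def cpt (p : Pt) : ℂ := ⟨p 0, p 1⟩

lemma dist_cpt (p q : Pt) : dist p q = ‖cpt p - cpt q‖ := by
  rw [EuclideanSpace.dist_eq, Complex.norm_def, Complex.normSq_apply]
  simp [Fin.sum_univ_two, cpt, Real.dist_eq, sq_abs]
  ring_nf

lemma chsq (s t : ℝ) :
    (‖Complex.exp ((s:ℝ) * Complex.I) - Complex.exp ((t:ℝ) * Complex.I)‖)^2
      = 2 - 2 * Real.cos (s - t) := by
  rw [Complex.sq_norm, Complex.normSq_apply]
  simp [Complex.exp_ofReal_mul_I_re, Complex.exp_ofReal_mul_I_im, Real.cos_sub]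
  nlinarith [Real.sin_sq_add_cos_sq s, Real.sin_sq_add_cos_sq t]

lemma exp_add_I (t s : ℝ) : Complex.exp (((t+s:ℝ)) * Complex.I)
    = Complex.exp ((t:ℝ) * Complex.I) * Complex.exp ((s:ℝ) * Complex.I) := by
  rw [← Complex.exp_add]
  congr 1
  push_cast
  ring

lemma one_le_sq_of_one_le {x : ℝ} (h : 1 ≤ x) : 1 ≤ x^2 := by nlinarith

lemma eq_one_of_sq {x : ℝ} (h0 : 0 ≤ x) (h : x^2 = 1) : x = 1 := by nlinarith

lemma dist_sq_circle {O p q : Pt} {u v : ℝ}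
    (hp : cpt p - cpt O = Complex.exp ((u:ℝ) * Complex.I))
    (hq : cpt q - cpt O = Complex.exp ((v:ℝ) * Complex.I)) :
    (dist p q)^2 = 2 - 2 * Real.cos (u - v) := by
  rw [dist_cpt, show cpt p - cpt q = (cpt p - cpt O) - (cpt q - cpt O) by ring, hp, hq, chsq]

lemma cos_le_half_of_dist {O p q : Pt} {u v : ℝ}
    (hp : cpt p - cpt O = Complex.exp ((u:ℝ) * Complex.I))
    (hq : cpt q - cpt O = Complex.exp ((v:ℝ) * Complex.I))
    (h : 1 ≤ dist p q) : Real.cos (u - v) ≤ 1/2 := by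
  have := one_le_sq_of_one_le h
  rw [dist_sq_circle hp hq] at this
  linarith

lemma dist_one_of_cos {O p q : Pt} {u v : ℝ}
    (hp : cpt p - cpt O = Complex.exp ((u:ℝ) * Complex.I))
    (hq : cpt q - cpt O = Complex.exp ((v:ℝ) * Complex.I))
    (h : Real.cos (u - v) = 1/2) : dist p q = 1 := by
  apply eq_one_of_sq dist_nonneg
  rw [dist_sq_circle hp hq, h]
  ring

lemma chord_low {x : ℝ} (h : Real.cos x ≤ 1/2) : π/3 ≤ |x| := by
  by_contra hc
  push_neg at hc
  have h1 : Real.cos (π/3) < Real.cos |x| := by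
    apply Real.strictAntiOn_cos ⟨abs_nonneg x, le_trans hc.le (by linarith [Real.pi_pos])⟩
      ⟨by positivity, by linarith [Real.pi_pos]⟩ hc
  rw [Real.cos_abs, Real.cos_pi_div_three] at h1
  linarith

lemma deg_eq_card (P : Finset Pt) (B : Pt) [DecidablePred fun q => dist B q = 1] :
    deg P B = (P.filter (fun q => dist B q = 1)).card := by
  rw [deg, ← Set.ncard_coe_finset]
  congr 1
  ext q
  simp [Finset.mem_filter]


lemma cpt_inj {p q : EuclideanSpace ℝ (Fin 2)} (h : cpt p = cpt q) : p = q := by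
  have h1 : p 0 = q 0 := congrArg Complex.re h
  have h2 : p 1 = q 1 := congrArg Complex.im h
  ext i
  fin_cases i <;> assumption

lemma cos_lt_cos_of_abs_lt {x y : ℝ} (hy : y ≤ π) (hxy : |x| < y) :
    Real.cos y < Real.cos x := by
  rw [← Real.cos_abs x]
  exact Real.strictAntiOn_cos ⟨abs_nonneg x, le_trans hxy.le hy⟩ ⟨le_trans (abs_nonneg x) hxy.le, hy⟩ hxy

lemma chord_high {x : ℝ} (h : Real.cos x ≤ 1/2) (h0 : 0 < x) (h2 : x < 2*π) : x ≤ 5*π/3 := by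
  by_contra hc
  push_neg at hc
  have h3 : |2*π - x| < π/3 := by
    rw [abs_lt]; constructor <;> linarith
  have := cos_lt_cos_of_abs_lt (by linarith [Real.pi_pos] : π/3 ≤ π) h3
  rw [Real.cos_pi_div_three, Real.cos_two_pi_sub] at this
  linarith

lemma four_pts {d l u x1 x2 x3 x4 : ℝ}
    (h12 : d ≤ |x1 - x2|) (h13 : d ≤ |x1 - x3|) (h14 : d ≤ |x1 - x4|)
    (h23 : d ≤ |x2 - x3|) (h24 : d ≤ |x2 - x4|) (h34 : d ≤ |x3 - x4|)
    (b1l : l ≤ x1) (b1u : x1 ≤ u) (b2l : l ≤ x2) (b2u : x2 ≤ u)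
    (b3l : l ≤ x3) (b3u : x3 ≤ u) (b4l : l ≤ x4) (b4u : x4 ≤ u) :
    3 * d ≤ u - l := by
  rcases le_abs.1 h12 with h12 | h12 <;>
  rcases le_abs.1 h13 with h13 | h13 <;>
  rcases le_abs.1 h14 with h14 | h14 <;>
  rcases le_abs.1 h23 with h23 | h23 <;>
  rcases le_abs.1 h24 with h24 | h24 <;>
  rcases le_abs.1 h34 with h34 | h34 <;>
  linarith

lemma gaps_aux {θ0 θ1 θ2 θ3 θ4 : ℝ}
    (g1 : π/3 ≤ θ1) (g2 : π/3 ≤ θ2) (g3 : π/3 ≤ θ3) (g4 : π/3 ≤ θ4)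
    (hsum : θ0 + θ1 + θ2 + θ3 + θ4 = 2*π)
    (d12 : π ≤ θ1 + θ2 ∨ θ1 = π/3 ∨ θ2 = π/3)
    (d34 : π ≤ θ3 + θ4 ∨ θ3 = π/3 ∨ θ4 = π/3)
    (e0 : θ0 = π/3)
    (n01 : ¬(θ0 = π/3 ∧ θ1 = π/3)) (n23 : ¬(θ2 = π/3 ∧ θ3 = π/3))
    (n34 : ¬(θ3 = π/3 ∧ θ4 = π/3)) (n40 : ¬(θ4 = π/3 ∧ θ0 = π/3)) :
    False := by
  have l1 : π/3 < θ1 := lt_of_le_of_ne g1 (fun e => n01 ⟨e0, e.symm⟩)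
  have l4 : π/3 < θ4 := lt_of_le_of_ne g4 (fun e => n40 ⟨e.symm, e0⟩)
  rcases d12 with s12 | e1 | e2
  · rcases g3.lt_or_eq with l3 | e3
    · rcases d34 with s34 | e3' | e4'
      · linarith
      · exact absurd e3' (ne_of_gt l3)
      · exact absurd e4' (ne_of_gt l4)
    · -- θ3 = π/3
      have : θ4 ≤ π/3 := by linarith
      exact n34 ⟨e3.symm, le_antisymm this g4⟩
  · exact absurd e1 (ne_of_gt l1)
  · -- θ2 = π/3
    have l3 : π/3 < θ3 := lt_of_le_of_ne g3 (fun e => n23 ⟨e2, e.symm⟩)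
    rcases d34 with s34 | e3' | e4'
    · linarith
    · exact absurd e3' (ne_of_gt l3)
    · exact absurd e4' (ne_of_gt l4)

lemma gaps_lemma {θ0 θ1 θ2 θ3 θ4 : ℝ}
    (g0 : π/3 ≤ θ0) (g1 : π/3 ≤ θ1) (g2 : π/3 ≤ θ2) (g3 : π/3 ≤ θ3) (g4 : π/3 ≤ θ4)
    (hsum : θ0 + θ1 + θ2 + θ3 + θ4 = 2*π)
    (d01 : π ≤ θ0 + θ1 ∨ θ0 = π/3 ∨ θ1 = π/3)
    (d12 : π ≤ θ1 + θ2 ∨ θ1 = π/3 ∨ θ2 = π/3)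
    (d23 : π ≤ θ2 + θ3 ∨ θ2 = π/3 ∨ θ3 = π/3)
    (d34 : π ≤ θ3 + θ4 ∨ θ3 = π/3 ∨ θ4 = π/3)
    (d40 : π ≤ θ4 + θ0 ∨ θ4 = π/3 ∨ θ0 = π/3) :
    (θ0 = π/3 ∧ θ1 = π/3) ∨ (θ1 = π/3 ∧ θ2 = π/3) ∨ (θ2 = π/3 ∧ θ3 = π/3) ∨
    (θ3 = π/3 ∧ θ4 = π/3) ∨ (θ4 = π/3 ∧ θ0 = π/3) := by
  by_contra h
  rw [not_or, not_or, not_or, not_or] at h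
  obtain ⟨n01, n12, n23, n34, n40⟩ := h
  rcases g0.lt_or_eq with l0 | e0
  rcases g1.lt_or_eq with l1 | e1
  rcases g2.lt_or_eq with l2 | e2
  rcases g3.lt_or_eq with l3 | e3
  rcases g4.lt_or_eq with l4 | e4
  · -- all strict
    have s01 : π ≤ θ0 + θ1 := by
      rcases d01 with s | e | e
      · exact s
      · exact absurd e (ne_of_gt l0)
      · exact absurd e (ne_of_gt l1)
    have s23 : π ≤ θ2 + θ3 := by
      rcases d23 with s | e | e
      · exact s
      · exact absurd e (ne_of_gt l2)
      · exact absurd e (ne_of_gt l3)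
    linarith
  · exact gaps_aux g0 g1 g2 g3 (by linarith) d01 d23 e4.symm n40 n12 n23 n34
  · exact gaps_aux g4 g0 g1 g2 (by linarith) d40 d12 e3.symm n34 n01 n12 n23
  · exact gaps_aux g3 g4 g0 g1 (by linarith) d34 d01 e2.symm n23 n40 n01 n12
  · exact gaps_aux g2 g3 g4 g0 (by linarith) d23 d40 e1.symm n12 n34 n40 n01
  · exact gaps_aux g1 g2 g3 g4 (by linarith) d12 d34 e0.symm n01 n23 n34 n40

lemma sin_mid {a w : ℝ} (ha0 : 0 ≤ a) (ha : a ≤ π/2) (h1 : a < w) (h2 : w < π - a) :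
    Real.sin a < Real.sin w := by
  rcases le_or_gt w (π/2) with hw | hw
  · exact Real.strictMonoOn_sin ⟨by linarith, ha⟩ ⟨by linarith [Real.pi_pos], hw⟩ h1
  · rw [← Real.sin_pi_sub w]
    exact Real.strictMonoOn_sin ⟨by linarith, ha⟩ ⟨by linarith, by linarith⟩ (by linarith)

lemma key1 (s : ℝ) :
    (‖Complex.exp ((s:ℝ) * Complex.I) + 1‖)^2 = 2 + 2 * Real.cos s := by
  rw [Complex.sq_norm, Complex.normSq_apply]
  simp [Complex.exp_ofReal_mul_I_re, Complex.exp_ofReal_mul_I_im]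
  nlinarith [Real.sin_sq_add_cos_sq s]

lemma key2 (w a : ℝ) :
    (‖Complex.exp (((w + a : ℝ)) * Complex.I) + 1 - Complex.exp (((2*a : ℝ)) * Complex.I)‖)^2
      = 1 + 4 * Real.sin a * (Real.sin a - Real.sin w) := by
  rw [Complex.sq_norm, Complex.normSq_apply]
  simp only [Complex.add_re, Complex.sub_re, Complex.one_re, Complex.add_im, Complex.sub_im,
    Complex.one_im, Complex.exp_ofReal_mul_I_re, Complex.exp_ofReal_mul_I_im]
  rw [Real.cos_add, Real.sin_add, Real.cos_two_mul, Real.sin_two_mul]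
  linear_combination (Real.sin_sq_add_cos_sq w) * ((Real.sin a)^2 + (Real.cos a)^2)
    + (Real.sin_sq_add_cos_sq a) * (4*(Real.cos a)^2 - 4*(Real.cos w)*(Real.cos a) - 3)

lemma constraint {s θ : ℝ} (hθ1 : π/3 < θ) (hθ2 : θ ≤ 2*π/3) (hs : s < π)
    (h : 1 ≤ ‖Complex.exp ((s:ℝ) * Complex.I) + 1 - Complex.exp ((θ:ℝ) * Complex.I)‖) :
    s ≤ θ := by
  have hπ := Real.pi_pos
  by_contra hc
  push_neg at hc
  have e1 : ((s - θ/2) + θ/2 : ℝ) = s := by ring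
  have e2 : (2 * (θ/2) : ℝ) = θ := by ring
  have h2 : 1 ≤ (‖Complex.exp (((s - θ/2) + θ/2 : ℝ) * Complex.I) + 1
      - Complex.exp (((2*(θ/2) : ℝ)) * Complex.I)‖)^2 := by
    rw [e1, e2]
    calc (1:ℝ) = 1^2 := by norm_num
    _ ≤ _ := by apply pow_le_pow_left₀ (by norm_num) h
  rw [key2] at h2
  have hsa : 0 < Real.sin (θ/2) :=
    Real.sin_pos_of_pos_of_lt_pi (by linarith) (by linarith)
  have hmid : Real.sin (θ/2) < Real.sin (s - θ/2) :=
    sin_mid (by linarith) (by linarith) (by linarith) (by linarith)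
  nlinarith [mul_pos hsa (sub_pos.2 hmid)]

lemma constraint' {s θ : ℝ} (hθ1 : π/3 < θ) (hθ2 : θ ≤ 2*π/3) (hs : -π < s)
    (h : 1 ≤ ‖Complex.exp ((s:ℝ) * Complex.I) + 1 - Complex.exp ((-θ:ℝ) * Complex.I)‖) :
    -θ ≤ s := by
  have hconj : Complex.exp (((-s : ℝ)) * Complex.I) + 1 - Complex.exp ((θ:ℝ) * Complex.I)
      = (starRingEnd ℂ) (Complex.exp ((s:ℝ) * Complex.I) + 1 - Complex.exp ((-θ:ℝ) * Complex.I)) := by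
    have a1 : ((-s:ℝ):ℂ) * Complex.I = (starRingEnd ℂ) ((s:ℝ) * Complex.I) := by
      rw [map_mul, Complex.conj_ofReal, Complex.conj_I]; push_cast; ring
    have a2 : ((θ:ℝ):ℂ) * Complex.I = (starRingEnd ℂ) ((-θ:ℝ) * Complex.I) := by
      rw [map_mul, Complex.conj_ofReal, Complex.conj_I]; push_cast; ring
    rw [map_sub, map_add, map_one, ← Complex.exp_conj, ← Complex.exp_conj, ← a1, ← a2]
  have h' : 1 ≤ ‖Complex.exp (((-s : ℝ)) * Complex.I) + 1 - Complex.exp ((θ:ℝ) * Complex.I)‖ := by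
    rw [hconj, Complex.norm_conj]; exact h
  have := constraint hθ1 hθ2 (by linarith : -s < π) h'
  linarith

lemma star (P : Finset Pt) (hP1 : ∀ p ∈ P, ∀ q ∈ P, p ≠ q → 1 ≤ dist p q)
    {A B Bp Bm : Pt} (hA : A ∈ P) (hBP : B ∈ P) (hBpP : Bp ∈ P) (hBmP : Bm ∈ P)
    {t θ θ' : ℝ} (hθ1 : π/3 < θ) (hθ2 : θ ≤ 2*π/3) (hθ'1 : π/3 < θ') (hθ'2 : θ' ≤ 2*π/3)
    (e1 : cpt B - cpt A = Complex.exp ((t:ℝ) * Complex.I))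
    (e2 : cpt Bp - cpt A = Complex.exp (((t+θ:ℝ)) * Complex.I))
    (e3 : cpt Bm - cpt A = Complex.exp (((t-θ':ℝ)) * Complex.I))
    (hdeg : deg P B = 5) : π ≤ θ + θ' := by
  classical
  have hπ := Real.pi_pos
  have eA : cpt A - cpt B = Complex.exp (((t+π:ℝ)) * Complex.I) := by
    rw [exp_add_I t π]
    have hpi : Complex.exp ((π:ℝ) * Complex.I) = -1 := by
      simpa using Complex.exp_pi_mul_I
    rw [hpi, ← e1]; ring
  have hcosθ : Real.cos θ < 1/2 := by
    have h := Real.strictAntiOn_cos (Set.mem_Icc.2 ⟨by linarith, by linarith⟩)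
      (Set.mem_Icc.2 ⟨by linarith, by linarith⟩) hθ1
    rwa [Real.cos_pi_div_three] at h
  have hcosθ' : Real.cos θ' < 1/2 := by
    have h := Real.strictAntiOn_cos (Set.mem_Icc.2 ⟨by linarith, by linarith⟩)
      (Set.mem_Icc.2 ⟨by linarith, by linarith⟩) hθ'1
    rwa [Real.cos_pi_div_three] at h
  have hBBp : (1:ℝ) < dist B Bp := by
    have h2 : (dist B Bp)^2 = 2 - 2*Real.cos (t - (t+θ)) := by
      rw [dist_cpt, show cpt B - cpt Bp = (cpt B - cpt A) - (cpt Bp - cpt A) by ring, e1, e2, chsq]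
    rw [show t - (t+θ) = -θ by ring, Real.cos_neg] at h2
    nlinarith [dist_nonneg (x := B) (y := Bp)]
  have hBBm : (1:ℝ) < dist B Bm := by
    have h2 : (dist B Bm)^2 = 2 - 2*Real.cos (t - (t-θ')) := by
      rw [dist_cpt, show cpt B - cpt Bm = (cpt B - cpt A) - (cpt Bm - cpt A) by ring, e1, e3, chsq]
    rw [show t - (t-θ') = θ' by ring] at h2
    nlinarith [dist_nonneg (x := B) (y := Bm)]
  set M := P.filter (fun q => dist B q = 1) with hMdef
  have hM : M.card = 5 := by rw [hMdef, ← deg_eq_card]; exact hdeg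
  have hAM : A ∈ M := by
    refine Finset.mem_filter.2 ⟨hA, ?_⟩
    rw [dist_cpt, e1]
    exact Complex.norm_exp_ofReal_mul_I t
  have main : ∀ C ∈ M.erase A,
      ∃ s : ℝ, (cpt C - cpt B = Complex.exp (((t+s:ℝ)) * Complex.I)) ∧ -θ' ≤ s ∧ s ≤ θ := by
    intro C hC
    obtain ⟨hCA, hCM⟩ := Finset.mem_erase.1 hC
    obtain ⟨hCP, hCd⟩ := Finset.mem_filter.1 hCM
    have habs : ‖cpt C - cpt B‖ = 1 := by
      rw [norm_sub_rev, ← dist_cpt]; exact hCd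
    set u := Complex.exp ((-t : ℝ) * Complex.I) * (cpt C - cpt B) with hu
    have huabs : ‖u‖ = 1 := by
      rw [hu, norm_mul, habs, mul_one, Complex.norm_exp_ofReal_mul_I]
    set s := u.arg with hs
    have hus : u = Complex.exp ((s:ℝ) * Complex.I) := by
      conv_lhs => rw [← Complex.norm_mul_exp_arg_mul_I u]
      rw [huabs, ← hs, Complex.ofReal_one, one_mul]
    have hCB : cpt C - cpt B = Complex.exp (((t+s:ℝ)) * Complex.I) := by
      rw [exp_add_I, ← hus, hu, ← mul_assoc, ← Complex.exp_add]
      rw [show (t:ℂ) * Complex.I + ((-t : ℝ):ℂ) * Complex.I = 0 by push_cast; ring]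
      rw [Complex.exp_zero, one_mul]
    have hs1 : -π < s := Complex.neg_pi_lt_arg u
    have hs2 : s ≤ π := Complex.arg_le_pi u
    have hdCA : 1 ≤ dist C A := hP1 C hCP A hA hCA
    have hcos : Real.cos ((t+s) - (t+π)) ≤ 1/2 := cos_le_half_of_dist hCB eA hdCA
    rw [show (t+s) - (t+π) = -(π - s) by ring, Real.cos_neg, Real.cos_pi_sub] at hcos
    have habs23 : |s| ≤ 2*π/3 := by
      by_contra hcc
      push_neg at hcc
      have h := Real.strictAntiOn_cos (Set.mem_Icc.2 ⟨by linarith, by linarith⟩)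
        (Set.mem_Icc.2 ⟨abs_nonneg s, abs_le.2 ⟨by linarith, hs2⟩⟩) hcc
      rw [Real.cos_abs, show (2*π/3 : ℝ) = π - π/3 by ring, Real.cos_pi_sub,
        Real.cos_pi_div_three] at h
      linarith
    have hCBp' : C ≠ Bp := by
      intro h; rw [h] at hCd; linarith
    have hCBm' : C ≠ Bm := by
      intro h; rw [h] at hCd; linarith
    have hdCBp : 1 ≤ dist C Bp := hP1 C hCP Bp hBpP hCBp'
    have hdCBm : 1 ≤ dist C Bm := hP1 C hCP Bm hBmP hCBm'
    have habsBp : 1 ≤ ‖Complex.exp ((s:ℝ)*Complex.I) + 1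
        - Complex.exp ((θ:ℝ)*Complex.I)‖ := by
      have hfact : cpt C - cpt Bp = Complex.exp ((t:ℝ)*Complex.I) *
          (Complex.exp ((s:ℝ)*Complex.I) + 1 - Complex.exp ((θ:ℝ)*Complex.I)) := by
        rw [show cpt C - cpt Bp = (cpt C - cpt B) - ((cpt Bp - cpt A) - (cpt B - cpt A)) by ring,
          hCB, e2, e1, exp_add_I t s, exp_add_I t θ]
        ring
      rwa [dist_cpt, hfact, norm_mul, Complex.norm_exp_ofReal_mul_I, one_mul] at hdCBp
    have habsBm : 1 ≤ ‖Complex.exp ((s:ℝ)*Complex.I) + 1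
        - Complex.exp ((-θ':ℝ)*Complex.I)‖ := by
      have hfact : cpt C - cpt Bm = Complex.exp ((t:ℝ)*Complex.I) *
          (Complex.exp ((s:ℝ)*Complex.I) + 1 - Complex.exp ((-θ':ℝ)*Complex.I)) := by
        rw [show cpt C - cpt Bm = (cpt C - cpt B) - ((cpt Bm - cpt A) - (cpt B - cpt A)) by ring,
          hCB, e3, e1, exp_add_I t s, show ((t-θ':ℝ)) = ((t + (-θ') : ℝ)) by ring,
          exp_add_I t (-θ')]
        ring
      rwa [dist_cpt, hfact, norm_mul, Complex.norm_exp_ofReal_mul_I, one_mul] at hdCBm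
    have hsθ : s ≤ θ :=
      constraint hθ1 hθ2 (by linarith [(abs_le.1 habs23).2]) habsBp
    have hsθ' : -θ' ≤ s := constraint' hθ'1 hθ'2 hs1 habsBm
    exact ⟨s, hCB, hsθ', hsθ⟩
  have h4 : (M.erase A).card = 4 := by rw [Finset.card_erase_of_mem hAM, hM]
  obtain ⟨C1, hC1⟩ := Finset.card_pos.1 (by rw [h4]; norm_num : 0 < (M.erase A).card)
  have h3' : ((M.erase A).erase C1).card = 3 := by rw [Finset.card_erase_of_mem hC1, h4]
  obtain ⟨C2, hC2⟩ := Finset.card_pos.1 (by rw [h3']; norm_num : 0 < ((M.erase A).erase C1).card)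
  have h2' : (((M.erase A).erase C1).erase C2).card = 2 := by
    rw [Finset.card_erase_of_mem hC2, h3']
  obtain ⟨C3, hC3⟩ := Finset.card_pos.1
    (by rw [h2']; norm_num : 0 < (((M.erase A).erase C1).erase C2).card)
  have h1' : ((((M.erase A).erase C1).erase C2).erase C3).card = 1 := by
    rw [Finset.card_erase_of_mem hC3, h2']
  obtain ⟨C4, hC4⟩ := Finset.card_pos.1
    (by rw [h1']; norm_num : 0 < ((((M.erase A).erase C1).erase C2).erase C3).card)
  have hC2' : C2 ∈ M.erase A := Finset.mem_of_mem_erase hC2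
  have hC3'' : C3 ∈ (M.erase A).erase C1 := Finset.mem_of_mem_erase hC3
  have hC3' : C3 ∈ M.erase A := Finset.mem_of_mem_erase hC3''
  have hC4''' : C4 ∈ ((M.erase A).erase C1).erase C2 := Finset.mem_of_mem_erase hC4
  have hC4'' : C4 ∈ (M.erase A).erase C1 := Finset.mem_of_mem_erase hC4'''
  have hC4' : C4 ∈ M.erase A := Finset.mem_of_mem_erase hC4''
  have n21 : C2 ≠ C1 := (Finset.mem_erase.1 hC2).1
  have n31 : C3 ≠ C1 := (Finset.mem_erase.1 hC3'').1
  have n32 : C3 ≠ C2 := (Finset.mem_erase.1 hC3).1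
  have n41 : C4 ≠ C1 := (Finset.mem_erase.1 hC4'').1
  have n42 : C4 ≠ C2 := (Finset.mem_erase.1 hC4''').1
  have n43 : C4 ≠ C3 := (Finset.mem_erase.1 hC4).1
  have hP1' : ∀ C ∈ M.erase A, C ∈ P := fun C hC =>
    (Finset.mem_filter.1 (Finset.mem_of_mem_erase hC)).1
  obtain ⟨s1, hCB1, hl1, hu1⟩ := main C1 hC1
  obtain ⟨s2, hCB2, hl2, hu2⟩ := main C2 hC2'
  obtain ⟨s3, hCB3, hl3, hu3⟩ := main C3 hC3'
  obtain ⟨s4, hCB4, hl4, hu4⟩ := main C4 hC4'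
  have pair : ∀ {Ci Cj : Pt} {si sj : ℝ}, Ci ∈ P → Cj ∈ P → Ci ≠ Cj →
      (cpt Ci - cpt B = Complex.exp (((t+si:ℝ)) * Complex.I)) →
      (cpt Cj - cpt B = Complex.exp (((t+sj:ℝ)) * Complex.I)) →
      π/3 ≤ |si - sj| := by
    intro Ci Cj si sj hi hj hne hei hej
    have hd := hP1 Ci hi Cj hj hne
    have hc := cos_le_half_of_dist hei hej hd
    rw [show (t+si) - (t+sj) = si - sj by ring] at hc
    exact chord_low hc
  have h12 := pair (hP1' C1 hC1) (hP1' C2 hC2') (Ne.symm n21) hCB1 hCB2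
  have h13 := pair (hP1' C1 hC1) (hP1' C3 hC3') (Ne.symm n31) hCB1 hCB3
  have h14 := pair (hP1' C1 hC1) (hP1' C4 hC4') (Ne.symm n41) hCB1 hCB4
  have h23 := pair (hP1' C2 hC2') (hP1' C3 hC3') (Ne.symm n32) hCB2 hCB3
  have h24 := pair (hP1' C2 hC2') (hP1' C4 hC4') (Ne.symm n42) hCB2 hCB4
  have h34 := pair (hP1' C3 hC3') (hP1' C4 hC4') (Ne.symm n43) hCB3 hCB4
  have := four_pts h12 h13 h14 h23 h24 h34 hl1 hu1 hl2 hu2 hl3 hu3 hl4 hu4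
  linarith


lemma list5 {α : Type*} (m : List α) (hm : m.length = 5) :
    ∃ a b c d e, m = [a, b, c, d, e] := by
  rcases m with _|⟨a, _|⟨b, _|⟨c, _|⟨d, _|⟨e, _|⟨f, g⟩⟩⟩⟩⟩⟩ <;>
    first
      | (exact ⟨a, b, c, d, e, rfl⟩)
      | simp_all

lemma exp_add_two_pi (x : ℝ) :
    Complex.exp (((x + 2*π : ℝ)) * Complex.I) = Complex.exp ((x:ℝ) * Complex.I) := by
  rw [exp_add_I x (2*π)]
  have h1 : ((2*π : ℝ) : ℂ) * Complex.I = 2 * (π:ℂ) * Complex.I := by push_cast; ring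
  rw [h1, Complex.exp_two_pi_mul_I, mul_one]

lemma exp_sub_two_pi (x : ℝ) :
    Complex.exp (((x - 2*π : ℝ)) * Complex.I) = Complex.exp ((x:ℝ) * Complex.I) := by
  rw [show (x - 2*π : ℝ) = x + (-(2*π)) by ring, exp_add_I]
  have h1 : ((-(2*π) : ℝ) : ℂ) * Complex.I = -(2 * (π:ℂ) * Complex.I) := by push_cast; ring
  rw [h1, Complex.exp_neg, Complex.exp_two_pi_mul_I, inv_one, mul_one]

theorem degree_five_all_neighbors_degree_five_in_kernel (P : Finset Pt)
    (hP : PennyGP P) (A : Pt) (hA : A ∈ P) (hdA : deg P A = 5)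
    (hnb : ∀ B ∈ P, dist A B = 1 → deg P B = 5) :
    ∃ X ∈ P, ∃ Y ∈ P, ∃ Z ∈ P,
      dist A X = 1 ∧ dist A Y = 1 ∧ dist A Z = 1 ∧
      dist X Y = 1 ∧ dist Y Z = 1 ∧ IsKernel P A X Y Z := by
  classical
  obtain ⟨hP1, -⟩ := hP
  have hπ := Real.pi_pos
  set N := P.filter (fun q => dist A q = 1) with hNdef
  have hN : N.card = 5 := by rw [hNdef, ← deg_eq_card]; exact hdA
  have hNP : ∀ q ∈ N, q ∈ P := fun q hq => (Finset.mem_filter.1 hq).1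
  have hNd : ∀ q ∈ N, dist A q = 1 := fun q hq => (Finset.mem_filter.1 hq).2
  have unit : ∀ q ∈ N, ‖cpt q - cpt A‖ = 1 := by
    intro q hq
    rw [norm_sub_rev, ← dist_cpt]
    exact hNd q hq
  have expof : ∀ q ∈ N, cpt q - cpt A
      = Complex.exp (((cpt q - cpt A).arg : ℝ) * Complex.I) := by
    intro q hq
    conv_lhs => rw [← Complex.norm_mul_exp_arg_mul_I (cpt q - cpt A)]
    rw [unit q hq, Complex.ofReal_one, one_mul]
  have hinj : Set.InjOn (fun q => (cpt q - cpt A).arg) N := by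
    intro p hp q hq h
    apply cpt_inj
    have h2 : cpt p - cpt A = cpt q - cpt A := by
      rw [expof p hp, expof q hq]
      simp only at h
      rw [h]
    have h3 := congrArg (· + cpt A) h2
    simpa using h3
  set T := N.image (fun q => (cpt q - cpt A).arg) with hTdef
  have hT : T.card = 5 := by rw [hTdef, Finset.card_image_of_injOn hinj, hN]
  obtain ⟨t0, t1, t2, t3, t4, hl⟩ := list5 (T.sort (· ≤ ·)) (by rw [Finset.length_sort, hT])
  have hsort := (Finset.sortedLT_sort T).pairwise
  rw [hl] at hsort
  simp only [List.pairwise_cons, List.mem_cons, List.mem_singleton, List.not_mem_nil,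
    forall_eq_or_imp, forall_eq, List.Pairwise.nil, and_true] at hsort
  obtain ⟨⟨h01, h02, h03, h04⟩, ⟨h12, h13, h14⟩, ⟨h23, h24⟩, h34⟩ := hsort
  have h04 : t0 < t4 := h04.1
  have h14 : t1 < t4 := h14.1
  have h24 : t2 < t4 := h24.1
  have h34 : t3 < t4 := h34.1.1
  have hmemT : ∀ x ∈ ([t0, t1, t2, t3, t4] : List ℝ), x ∈ T := by
    intro x hx
    rw [← Finset.mem_sort (α := ℝ) (· ≤ ·), hl]
    exact hx
  obtain ⟨B0, hB0N, hB0arg⟩ := Finset.mem_image.1 (hmemT t0 (by simp))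
  obtain ⟨B1, hB1N, hB1arg⟩ := Finset.mem_image.1 (hmemT t1 (by simp))
  obtain ⟨B2, hB2N, hB2arg⟩ := Finset.mem_image.1 (hmemT t2 (by simp))
  obtain ⟨B3, hB3N, hB3arg⟩ := Finset.mem_image.1 (hmemT t3 (by simp))
  obtain ⟨B4, hB4N, hB4arg⟩ := Finset.mem_image.1 (hmemT t4 (by simp))
  have e0 : cpt B0 - cpt A = Complex.exp ((t0:ℝ) * Complex.I) := by
    rw [expof B0 hB0N, hB0arg]
  have e1 : cpt B1 - cpt A = Complex.exp ((t1:ℝ) * Complex.I) := by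
    rw [expof B1 hB1N, hB1arg]
  have e2 : cpt B2 - cpt A = Complex.exp ((t2:ℝ) * Complex.I) := by
    rw [expof B2 hB2N, hB2arg]
  have e3 : cpt B3 - cpt A = Complex.exp ((t3:ℝ) * Complex.I) := by
    rw [expof B3 hB3N, hB3arg]
  have e4 : cpt B4 - cpt A = Complex.exp ((t4:ℝ) * Complex.I) := by
    rw [expof B4 hB4N, hB4arg]
  have hr0 : -π < t0 := by rw [← hB0arg]; exact Complex.neg_pi_lt_arg _
  have hr4 : t4 ≤ π := by rw [← hB4arg]; exact Complex.arg_le_pi _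
  have neB : ∀ {Bi Bj : Pt} {ti tj : ℝ}, (cpt Bi - cpt A).arg = ti →
      (cpt Bj - cpt A).arg = tj → ti ≠ tj → Bi ≠ Bj := by
    intro Bi Bj ti tj hi hj hne h
    exact hne (by rw [← hi, ← hj, h])
  have pairA : ∀ {Bi Bj : Pt} {ti tj : ℝ}, Bi ∈ N → Bj ∈ N → Bi ≠ Bj →
      (cpt Bi - cpt A = Complex.exp ((ti:ℝ) * Complex.I)) →
      (cpt Bj - cpt A = Complex.exp ((tj:ℝ) * Complex.I)) →
      Real.cos (ti - tj) ≤ 1/2 := by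
    intro Bi Bj ti tj hi hj hne hei hej
    exact cos_le_half_of_dist hei hej (hP1 Bi (hNP Bi hi) Bj (hNP Bj hj) hne)
  have g0 : π/3 ≤ t1 - t0 := by
    have hc := pairA hB1N hB0N (neB hB1arg hB0arg (ne_of_gt h01)) e1 e0
    have := chord_low hc
    rwa [abs_of_pos (by linarith)] at this
  have g1 : π/3 ≤ t2 - t1 := by
    have hc := pairA hB2N hB1N (neB hB2arg hB1arg (ne_of_gt h12)) e2 e1
    have := chord_low hc
    rwa [abs_of_pos (by linarith)] at this
  have g2 : π/3 ≤ t3 - t2 := by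
    have hc := pairA hB3N hB2N (neB hB3arg hB2arg (ne_of_gt h23)) e3 e2
    have := chord_low hc
    rwa [abs_of_pos (by linarith)] at this
  have g3 : π/3 ≤ t4 - t3 := by
    have hc := pairA hB4N hB3N (neB hB4arg hB3arg (ne_of_gt h34)) e4 e3
    have := chord_low hc
    rwa [abs_of_pos (by linarith)] at this
  have g4 : π/3 ≤ t0 + 2*π - t4 := by
    have hc := pairA hB4N hB0N (neB hB4arg hB0arg (ne_of_gt h04)) e4 e0
    have := chord_high hc (by linarith) (by linarith)
    linarith
  have dvert : ∀ (Bm Bi Bp : Pt) (ti thm thp : ℝ), Bm ∈ N → Bi ∈ N → Bp ∈ N →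
      (cpt Bi - cpt A = Complex.exp ((ti:ℝ) * Complex.I)) →
      (cpt Bm - cpt A = Complex.exp (((ti - thm : ℝ)) * Complex.I)) →
      (cpt Bp - cpt A = Complex.exp (((ti + thp : ℝ)) * Complex.I)) →
      π/3 ≤ thm → π/3 ≤ thp →
      (π ≤ thm + thp ∨ thm = π/3 ∨ thp = π/3) := by
    intro Bm Bi Bp ti thm thp hm hi hp hei hem hep hgm hgp
    rcases hgm.lt_or_eq with lm | em
    · rcases hgp.lt_or_eq with lp | ep
      · rcases le_or_gt thm (2*π/3) with sm | sm
        · rcases le_or_gt thp (2*π/3) with sp | sp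
          · left
            have := star P hP1 hA (hNP Bi hi) (hNP Bp hp) (hNP Bm hm)
              lp sp lm sm hei hep hem (hnb Bi (hNP Bi hi) (hNd Bi hi))
            linarith
          · left; linarith
        · left; linarith
      · right; right; exact ep.symm
    · right; left; exact em.symm
  have d01 := dvert B0 B1 B2 t1 (t1 - t0) (t2 - t1) hB0N hB1N hB2N e1
    (by rw [show (t1 - (t1 - t0) : ℝ) = t0 by ring]; exact e0)
    (by rw [show (t1 + (t2 - t1) : ℝ) = t2 by ring]; exact e2) g0 g1
  have d12 := dvert B1 B2 B3 t2 (t2 - t1) (t3 - t2) hB1N hB2N hB3N e2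
    (by rw [show (t2 - (t2 - t1) : ℝ) = t1 by ring]; exact e1)
    (by rw [show (t2 + (t3 - t2) : ℝ) = t3 by ring]; exact e3) g1 g2
  have d23 := dvert B2 B3 B4 t3 (t3 - t2) (t4 - t3) hB2N hB3N hB4N e3
    (by rw [show (t3 - (t3 - t2) : ℝ) = t2 by ring]; exact e2)
    (by rw [show (t3 + (t4 - t3) : ℝ) = t4 by ring]; exact e4) g2 g3
  have d34 := dvert B3 B4 B0 t4 (t4 - t3) (t0 + 2*π - t4) hB3N hB4N hB0N e4
    (by rw [show (t4 - (t4 - t3) : ℝ) = t3 by ring]; exact e3)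
    (by rw [show (t4 + (t0 + 2*π - t4) : ℝ) = t0 + 2*π by ring, exp_add_two_pi]; exact e0) g3 g4
  have d40 := dvert B4 B0 B1 t0 (t0 + 2*π - t4) (t1 - t0) hB4N hB0N hB1N e0
    (by rw [show (t0 - (t0 + 2*π - t4) : ℝ) = t4 - 2*π by ring, exp_sub_two_pi]; exact e4)
    (by rw [show (t0 + (t1 - t0) : ℝ) = t1 by ring]; exact e1) g4 g0
  have final : ∀ X Y Z : Pt, X ∈ N → Y ∈ N → Z ∈ N → X ≠ Z →
      dist X Y = 1 → dist Y Z = 1 →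
      ∃ X ∈ P, ∃ Y ∈ P, ∃ Z ∈ P,
        dist A X = 1 ∧ dist A Y = 1 ∧ dist A Z = 1 ∧
        dist X Y = 1 ∧ dist Y Z = 1 ∧ IsKernel P A X Y Z := by
    intro X Y Z hXN hYN hZN hXZ hXY hYZ
    have hXP := hNP X hXN
    have hYP := hNP Y hYN
    have hZP := hNP Z hZN
    have hAX := hNd X hXN
    have hAY := hNd Y hYN
    have hAZ := hNd Z hZN
    have neAX : A ≠ X := by intro h; rw [← h, dist_self] at hAX; norm_num at hAX
    have neAY : A ≠ Y := by intro h; rw [← h, dist_self] at hAY; norm_num at hAY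
    have neAZ : A ≠ Z := by intro h; rw [← h, dist_self] at hAZ; norm_num at hAZ
    have neXY : X ≠ Y := by intro h; rw [h, dist_self] at hXY; norm_num at hXY
    have neYZ : Y ≠ Z := by intro h; rw [h, dist_self] at hYZ; norm_num at hYZ
    refine ⟨X, hXP, Y, hYP, Z, hZP, hAX, hAY, hAZ, hXY, hYZ,
      hA, hXP, hYP, hZP, ?_, hdA, hnb X hXP hAX, hnb Y hYP hAY, hnb Z hZP hAZ,
      hAX, hXY, hYZ, by rw [dist_comm]; exact hAZ, hAY⟩
    simp only [List.pairwise_cons, List.mem_cons, List.not_mem_nil, List.mem_singleton]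
    refine ⟨?_, ?_, ?_, fun _ h => h.elim, List.Pairwise.nil⟩
    · rintro b (rfl | rfl | rfl | h)
      · exact neAX
      · exact neAY
      · exact neAZ
      · exact h.elim
    · rintro b (rfl | rfl | h)
      · exact neXY
      · exact hXZ
      · exact h.elim
    · rintro b (rfl | h)
      · exact neYZ
      · exact h.elim
  have distXY : ∀ {Bi Bj : Pt} {ti tj : ℝ},
      (cpt Bi - cpt A = Complex.exp ((ti:ℝ) * Complex.I)) →
      (cpt Bj - cpt A = Complex.exp ((tj:ℝ) * Complex.I)) →
      Real.cos (ti - tj) = 1/2 → dist Bi Bj = 1 := by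
    intro Bi Bj ti tj hei hej hc
    exact dist_one_of_cos hei hej hc
  rcases gaps_lemma g0 g1 g2 g3 g4 (by ring) d01 d12 d23 d34 d40 with
    ⟨ha, hb⟩ | ⟨ha, hb⟩ | ⟨ha, hb⟩ | ⟨ha, hb⟩ | ⟨ha, hb⟩
  · exact final B0 B1 B2 hB0N hB1N hB2N (neB hB0arg hB2arg (ne_of_lt h02))
      (distXY e0 e1 (by rw [show t0 - t1 = -(t1 - t0) by ring, Real.cos_neg, ha,
        Real.cos_pi_div_three]))
      (distXY e1 e2 (by rw [show t1 - t2 = -(t2 - t1) by ring, Real.cos_neg, hb,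
        Real.cos_pi_div_three]))
  · exact final B1 B2 B3 hB1N hB2N hB3N (neB hB1arg hB3arg (ne_of_lt h13))
      (distXY e1 e2 (by rw [show t1 - t2 = -(t2 - t1) by ring, Real.cos_neg, ha,
        Real.cos_pi_div_three]))
      (distXY e2 e3 (by rw [show t2 - t3 = -(t3 - t2) by ring, Real.cos_neg, hb,
        Real.cos_pi_div_three]))
  · exact final B2 B3 B4 hB2N hB3N hB4N (neB hB2arg hB4arg (ne_of_lt h24))
      (distXY e2 e3 (by rw [show t2 - t3 = -(t3 - t2) by ring, Real.cos_neg, ha,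
        Real.cos_pi_div_three]))
      (distXY e3 e4 (by rw [show t3 - t4 = -(t4 - t3) by ring, Real.cos_neg, hb,
        Real.cos_pi_div_three]))
  · exact final B3 B4 B0 hB3N hB4N hB0N (neB hB3arg hB0arg (ne_of_gt h03))
      (distXY e3 e4 (by rw [show t3 - t4 = -(t4 - t3) by ring, Real.cos_neg, ha,
        Real.cos_pi_div_three]))
      (distXY e4 e0 (by rw [show t4 - t0 = 2*π - (t0 + 2*π - t4) by ring, Real.cos_two_pi_sub, hb,
        Real.cos_pi_div_three]))
  · exact final B4 B0 B1 hB4N hB0N hB1N (neB hB4arg hB1arg (ne_of_gt h14))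
      (distXY e4 e0 (by rw [show t4 - t0 = 2*π - (t0 + 2*π - t4) by ring, Real.cos_two_pi_sub, ha,
        Real.cos_pi_div_three]))
      (distXY e0 e1 (by rw [show t0 - t1 = -(t1 - t0) by ring, Real.cos_neg, hb,
        Real.cos_pi_div_three]))
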